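/- arXiv:1309.4026 — 7 statements merged into one kernel-verified Lean document; each statement's English description precedes it below -/
import Mathlib

section
/- Let M, N be natural numbers with 1 ≤ N < 2M, and define p ∈ ℝ by p = N(2M−N)/(2M) if 2M ≤ 2N and p = N/2 if 2M ≥ 2N (the two formulas agree when 2M = 2N). Then p/d_s(N,2M) + p/min(2M,2N) = 1; in particular, the point (p,p) of equation (11) lies on both boundary lines of the sum SDoF region of Theorem 1 and is its symmetric corner point (Remark 1). -/
/-- d_s(N,K): 0 if K ≤ N; N·K·(K−N)/(N² + K·(K−N)) if N ≤ K ≤ 2N; 2N/3 if K ≥ 2N. -/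
noncomputable def ds (N K : ℕ) : ℝ :=
  if K ≤ N then 0
  else if K ≤ 2 * N then
    (N : ℝ) * (K : ℝ) * ((K : ℝ) - (N : ℝ)) /
      ((N : ℝ) ^ 2 + (K : ℝ) * ((K : ℝ) - (N : ℝ)))
  else 2 * (N : ℝ) / 3

/-- For 1 ≤ N < 2M, the symmetric point p (= N(2M−N)/(2M) if 2M ≤ 2N and
N/2 if 2M ≥ 2N) lies on both boundary lines: p/d_s(N,2M) + p/min(2M,2N) = 1. -/
theorem symmetric_corner_on_boundary (M N : ℕ) (hN : 1 ≤ N) (hM : N < 2 * M) :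
    (if 2 * M ≤ 2 * N then (N : ℝ) * (2 * (M : ℝ) - (N : ℝ)) / (2 * (M : ℝ))
      else (N : ℝ) / 2) / ds N (2 * M) +
    (if 2 * M ≤ 2 * N then (N : ℝ) * (2 * (M : ℝ) - (N : ℝ)) / (2 * (M : ℝ))
      else (N : ℝ) / 2) / min (2 * (M : ℝ)) (2 * (N : ℝ)) = 1 := by
  have hM1 : 1 ≤ M := by omega
  have hMR : (1 : ℝ) ≤ (M : ℝ) := by exact_mod_cast hM1
  have hNR : (1 : ℝ) ≤ (N : ℝ) := by exact_mod_cast hN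
  have hMN : (N : ℝ) < 2 * (M : ℝ) := by exact_mod_cast hM
  unfold ds
  rcases le_or_gt (2 * M) (2 * N) with h | h
  · have hMNle : (M : ℝ) ≤ (N : ℝ) := by exact_mod_cast (by omega : M ≤ N)
    have h1 : ¬ (2 * M ≤ N) := by omega
    have h2 : 2 * M ≤ 2 * N := h
    rw [if_pos h, if_neg h1, if_pos h2]
    rw [min_eq_left (by linarith)]
    have hd : (N : ℝ) ^ 2 + (2 * M : ℕ) * (((2 * M : ℕ) : ℝ) - N) ≠ 0 := by
      push_cast; nlinarith
    have hnum : (N : ℝ) * ((2 * M : ℕ) : ℝ) * (((2 * M : ℕ) : ℝ) - N) ≠ 0 := by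
      push_cast
      have := mul_pos (mul_pos (by linarith : (0:ℝ) < N) (by linarith : (0:ℝ) < 2 * (M:ℝ)))
        (by linarith : (0:ℝ) < 2 * (M:ℝ) - N)
      linarith
    push_cast at hd hnum ⊢
    have hsub : (2 * (M : ℝ) - (N : ℝ)) ≠ 0 := by linarith
    field_simp
    ring
  · have h1 : ¬ (2 * M ≤ N) := by omega
    have h2 : ¬ (2 * M ≤ 2 * N) := by omega
    rw [if_neg h2, if_neg h1, if_neg h2]
    have hle : 2 * (N : ℝ) ≤ 2 * (M : ℝ) := by
      have : 2 * N ≤ 2 * M := by omega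
      exact_mod_cast this
    rw [min_eq_right hle]
    have hN0 : (N : ℝ) ≠ 0 := by linarith
    field_simp
    ring
end

section
/- Let M, N be natural numbers with 1 ≤ N, N < 2M and 2M ≤ 2N. Then N(2M−N)/M is the greatest element of the set {s ∈ ℝ : ∃ (x,y) ∈ C_SDoF(M,N), s = x + y}. (This is the case N ≤ 2M ≤ 2N of the total secure degrees of freedom formula, equation (12) of the paper.) -/
/-- Sum SDoF region of the (M,M,N,N) MIMO X-channel with asymmetric output feedback
and delayed CSIT (Theorem 1). -/
noncomputable def CSDoF (M N : ℕ) : Set (ℝ × ℝ) :=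
  {p | 0 ≤ p.1 ∧ 0 ≤ p.2 ∧
    p.1 / ds N (2 * M) + p.2 / min (2 * (M : ℝ)) (2 * (N : ℝ)) ≤ 1 ∧
    p.1 / min (2 * (M : ℝ)) (2 * (N : ℝ)) + p.2 / ds N (2 * M) ≤ 1}

/-- For 1 ≤ N < 2M and 2M ≤ 2N, the maximal sum x + y over
C_SDoF(M,N) equals N(2M−N)/M. -/
theorem total_sdof_case_mid (M N : ℕ) (hN : 1 ≤ N) (h1 : N < 2 * M)
    (h2 : 2 * M ≤ 2 * N) :
    IsGreatest {s : ℝ | ∃ p ∈ CSDoF M N, s = p.1 + p.2}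
      ((N : ℝ) * (2 * (M : ℝ) - (N : ℝ)) / (M : ℝ)) := by
  have hM : 1 ≤ M := by omega
  set m : ℝ := (M : ℝ) with hmdef
  set n : ℝ := (N : ℝ) with hndef
  have hm : (1:ℝ) ≤ m := by rw [hmdef]; exact_mod_cast hM
  have hn : (1:ℝ) ≤ n := by rw [hndef]; exact_mod_cast hN
  have h1' : n < 2 * m := by rw [hmdef, hndef]; exact_mod_cast h1
  have h2' : m ≤ n := by
    have h : M ≤ N := by omega
    rw [hmdef, hndef]; exact_mod_cast h
  have hD : (0:ℝ) < n ^ 2 + 2 * m * (2 * m - n) := by nlinarith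
  have hds : ds N (2 * M) = n * (2 * m) * (2 * m - n) / (n ^ 2 + 2 * m * (2 * m - n)) := by
    unfold ds
    rw [if_neg (by omega), if_pos (by omega)]
    push_cast
    ring_nf
    rfl
  have hmin : min (2 * m) (2 * n) = 2 * m := min_eq_left (by linarith)
  set d : ℝ := n * (2 * m) * (2 * m - n) / (n ^ 2 + 2 * m * (2 * m - n)) with hddef
  have hnum : 0 < n * (2 * m) * (2 * m - n) :=
    mul_pos (mul_pos (by linarith) (by linarith)) (by linarith)
  have hd : 0 < d := div_pos hnum hD
  set S : ℝ := n * (2 * m - n) / m with hSdef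
  have hkey : S * (2 * m + d) = 4 * m * d := by
    rw [hSdef, hddef]
    field_simp
    ring
  constructor
  · refine ⟨(S / 2, S / 2), ?_, by ring⟩
    have hS0 : 0 ≤ S :=
      div_nonneg (mul_nonneg (by linarith) (by linarith)) (by linarith)
    have heq : S / 2 / d + S / 2 / (2 * m) = 1 := by
      have hd' : d ≠ 0 := ne_of_gt hd
      have hm' : (2 * m) ≠ 0 := by positivity
      field_simp
      nlinarith [hkey]
    refine ⟨by positivity, by positivity, ?_, ?_⟩ <;>
      simp only [hds, ← hmdef, ← hndef, hmin, ← hddef] <;> linarith [heq]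
  · rintro s ⟨⟨x, y⟩, ⟨hx, hy, hA, hB⟩, rfl⟩
    simp only [hds, ← hmdef, ← hndef, hmin, ← hddef] at hA hB
    have hd' : d ≠ 0 := ne_of_gt hd
    have hm0 : (0:ℝ) < 2 * m := by linarith
    rw [div_add_div _ _ hd' (ne_of_gt hm0), div_le_one (by positivity)] at hA
    rw [div_add_div _ _ (ne_of_gt hm0) hd', div_le_one (by positivity)] at hB
    have hsum : (x + y) * (2 * m + d) ≤ 4 * m * d := by nlinarith
    have h2md : 0 < 2 * m + d := by linarith
    calc x + y ≤ 4 * m * d / (2 * m + d) := by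
          rw [le_div_iff₀ h2md]; exact hsum
      _ = S := by rw [← hkey]; field_simp
end

section
/- Let M, N be natural numbers with 1 ≤ N ≤ M. Then N is the greatest element of the set {s ∈ ℝ : ∃ (x,y) ∈ C_SDoF(M,N), s = x + y}. (This is the case 2M ≥ 2N of the total secure degrees of freedom formula, equation (12) of the paper.) -/
lemma ds_eq_high (M N : ℕ) (hN : 1 ≤ N) (hNM : N ≤ M) :
    ds N (2 * M) = 2 * (N : ℝ) / 3 := by
  unfold ds
  rw [if_neg (by omega : ¬ 2 * M ≤ N)]
  by_cases h2 : 2 * M ≤ 2 * N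
  · have hMN : M = N := by omega
    subst hMN
    rw [if_pos h2]
    have hM : (0 : ℝ) < (M : ℝ) := by exact_mod_cast hN
    push_cast
    rw [div_eq_div_iff (by nlinarith) (by norm_num)]
    ring
  · rw [if_neg h2]

/-- For 1 ≤ N ≤ M, the maximal sum x + y over C_SDoF(M,N) equals N. -/
theorem total_sdof_case_high (M N : ℕ) (hN : 1 ≤ N) (hNM : N ≤ M) :
    IsGreatest {s : ℝ | ∃ p ∈ CSDoF M N, s = p.1 + p.2} (N : ℝ) := by
  have hN0 : (0 : ℝ) < (N : ℝ) := by exact_mod_cast hN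
  have hmin : min (2 * (M : ℝ)) (2 * (N : ℝ)) = 2 * (N : ℝ) := by
    apply min_eq_right
    have : (N : ℝ) ≤ (M : ℝ) := by exact_mod_cast hNM
    linarith
  have hds := ds_eq_high M N hN hNM
  constructor
  · refine ⟨((N : ℝ) / 2, (N : ℝ) / 2), ⟨by positivity, by positivity, ?_, ?_⟩, by ring⟩
    all_goals
      simp only [hds, hmin]
      rw [div_add_div _ _ (by positivity) (by positivity)]
      rw [div_le_one (by positivity)]
      nlinarith [sq_nonneg ((N:ℝ))]
  · rintro s ⟨⟨x, y⟩, ⟨hx, hy, h1, h2⟩, rfl⟩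
    simp only [hds, hmin] at h1 h2
    rw [div_add_div _ _ (by positivity) (by positivity), div_le_one (by positivity)] at h1 h2
    simp only
    nlinarith [h1, h2]
end

section
/- For all natural numbers N ≥ 1 and K, d_s^loc(N,K) ≤ d_s(N,K). Equivalently, for N ≤ K ≤ 2N one has K²(K−N)/(2N² + (K−N)(3K−N)) ≤ N·K·(K−N)/(N² + K(K−N)); this reduces to the cubic inequality K³ − 4K²N + 5KN² − 3N³ ≤ 0 on N ≤ K ≤ 2N. (This quantifies the SDoF loss incurred by the lack of delayed CSIT: the inner bound of Theorem 3 is no larger than the region of Theorem 1.) -/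
/-- d_s^loc(N,K): 0 if K ≤ N; K²·(K−N)/(2N² + (K−N)(3K−N)) if N ≤ K < 2N; 2N/3 if K ≥ 2N. -/
noncomputable def dsloc (N K : ℕ) : ℝ :=
  if K ≤ N then 0
  else if K < 2 * N then
    (K : ℝ) ^ 2 * ((K : ℝ) - (N : ℝ)) /
      (2 * (N : ℝ) ^ 2 + ((K : ℝ) - (N : ℝ)) * (3 * (K : ℝ) - (N : ℝ)))
  else 2 * (N : ℝ) / 3

/-- For N ≥ 1 and every K, d_s^loc(N,K) ≤ d_s(N,K). -/
theorem dsloc_le_ds (N K : ℕ) (hN : 1 ≤ N) :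
    dsloc N K ≤ ds N K := by
  unfold ds dsloc
  by_cases h1 : K ≤ N
  · simp [h1]
  · simp only [h1, if_false]
    by_cases h2 : K < 2 * N
    · have h2' : K ≤ 2 * N := h2.le
      simp only [h2, h2', if_true]
      have hn : (1 : ℝ) ≤ (N : ℝ) := by exact_mod_cast hN
      have hk : (N : ℝ) + 1 ≤ (K : ℝ) := by
        have : N + 1 ≤ K := Nat.succ_le_of_lt (Nat.lt_of_not_le h1)
        exact_mod_cast this
      have hk2 : (K : ℝ) ≤ 2 * (N : ℝ) := by exact_mod_cast h2.le
      set n := (N : ℝ); set k := (K : ℝ)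
      have hd1 : 0 < 2 * n ^ 2 + (k - n) * (3 * k - n) := by nlinarith
      have hd2 : 0 < n ^ 2 + k * (k - n) := by nlinarith
      rw [div_le_div_iff₀ hd1 hd2]
      have hkn : (0:ℝ) ≤ k - n := by linarith
      have h2k : (0:ℝ) ≤ 2 * n - k := by linarith
      have key : 0 ≤ k * (k - n) * (n ^ 3 + (k - n) ^ 2 * (2 * n - k)) :=
        mul_nonneg (mul_nonneg (by linarith) hkn)
          (by nlinarith [mul_nonneg (sq_nonneg (k - n)) h2k])
      nlinarith [key]
    · have h2' : ¬ K < 2 * N := h2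
      by_cases h3 : K ≤ 2 * N
      · -- K = 2N
        have hK : K = 2 * N := le_antisymm h3 (Nat.le_of_not_lt h2)
        simp only [h2, if_false, h3, if_true]
        subst hK
        have hn : (0 : ℝ) < (N : ℝ) := by exact_mod_cast hN
        have : ((2 * N : ℕ) : ℝ) = 2 * (N : ℝ) := by push_cast; ring
        rw [this]
        rw [div_le_div_iff₀ (by nlinarith) (by nlinarith)]
        ring_nf
        nlinarith
      · simp [h2, h3]
end

section
/- Let M, N be natural numbers with 1 ≤ N < 2M. Then C_loc(M,N) ⊆ C_SDoF(M,N): the inner bound on the sum SDoF region of the two-user (M,M,N,N) MIMO X-channel with only asymmetric output feedback (Theorem 3) is contained in the sum SDoF region of the same channel with asymmetric output feedback and delayed CSIT (Theorem 1). -/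
/-- Inner bound on the sum SDoF region of the (M,M,N,N) MIMO X-channel with only
asymmetric output feedback (Theorem 3). -/
noncomputable def Cloc (M N : ℕ) : Set (ℝ × ℝ) :=
  {p | 0 ≤ p.1 ∧ 0 ≤ p.2 ∧
    p.1 / dsloc N (2 * M) + p.2 / min (2 * (M : ℝ)) (2 * (N : ℝ)) ≤ 1 ∧
    p.1 / min (2 * (M : ℝ)) (2 * (N : ℝ)) + p.2 / dsloc N (2 * M) ≤ 1}

/-- For 1 ≤ N < 2M, C_loc(M,N) ⊆ C_SDoF(M,N). -/
theorem Cloc_subset_CSDoF (M N : ℕ) (hN : 1 ≤ N) (hM : N < 2 * M) :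
    Cloc M N ⊆ CSDoF M N := by
  have hKN : ¬ (2 * M ≤ N) := not_le.mpr hM
  have hNr : (1 : ℝ) ≤ (N : ℝ) := by exact_mod_cast hN
  have hKr : (N : ℝ) < 2 * (M : ℝ) := by exact_mod_cast hM
  have hMr : (1 : ℝ) ≤ (M : ℝ) := by
    have : 1 ≤ M := by omega
    exact_mod_cast this
  have hpos : 0 < dsloc N (2 * M) := by
    unfold dsloc
    rw [if_neg hKN]
    split_ifs with h2
    · have h2r : (2 * M : ℝ) < 2 * (N : ℝ) := by exact_mod_cast h2
      push_cast
      apply div_pos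
      · have h1 : (0:ℝ) < (2 * (M:ℝ)) ^ 2 := by positivity
        have h2' : (0:ℝ) < 2 * (M:ℝ) - N := by linarith
        nlinarith
      · nlinarith
    · positivity
  have hle : dsloc N (2 * M) ≤ ds N (2 * M) := by
    unfold dsloc ds
    rw [if_neg hKN, if_neg hKN]
    by_cases h2 : 2 * M < 2 * N
    · rw [if_pos h2, if_pos (le_of_lt h2)]
      have h2r : (2 * M : ℝ) < 2 * (N : ℝ) := by exact_mod_cast h2
      push_cast
      rw [div_le_div_iff₀ (by nlinarith) (by nlinarith)]
      have htpos : (0:ℝ) < 2 * (M:ℝ) - N := by linarith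
      have htlt : 2 * (M:ℝ) - N < (N : ℝ) := by linarith
      have hapos : (0:ℝ) < 2 * (M:ℝ) := by linarith
      have hcube : (2 * (M:ℝ) - N) ^ 3 < (N:ℝ) ^ 3 :=
        pow_lt_pow_left₀ htlt htpos.le (by norm_num)
      have hfac : (0:ℝ) < (N:ℝ)^3 + (N:ℝ) * (2 * (M:ℝ) - N)^2 - (2 * (M:ℝ) - N)^3 := by
        nlinarith [hcube, mul_nonneg (by linarith : (0:ℝ) ≤ (N:ℝ)) (sq_nonneg (2 * (M:ℝ) - N))]
      have key : (0:ℝ) < (2 * (M:ℝ)) * (2 * (M:ℝ) - N) *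
          ((N:ℝ)^3 + (N:ℝ) * (2 * (M:ℝ) - N)^2 - (2 * (M:ℝ) - N)^3) :=
        mul_pos (mul_pos hapos htpos) hfac
      nlinarith [key]
    · rw [if_neg h2]
      by_cases h3 : 2 * M ≤ 2 * N
      · have hMN : 2 * M = 2 * N := le_antisymm h3 (not_lt.mp h2)
        rw [if_pos h3]
        push_cast [hMN]
        rw [div_le_div_iff₀ (by norm_num) (by nlinarith)]
        nlinarith
      · rw [if_neg h3]
  rintro p ⟨hx, hy, h1, h2⟩
  refine ⟨hx, hy, ?_, ?_⟩
  · calc p.1 / ds N (2 * M) + p.2 / min (2 * (M : ℝ)) (2 * (N : ℝ))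
        ≤ p.1 / dsloc N (2 * M) + p.2 / min (2 * (M : ℝ)) (2 * (N : ℝ)) := by
          gcongr
      _ ≤ 1 := h1
  · calc p.1 / min (2 * (M : ℝ)) (2 * (N : ℝ)) + p.2 / ds N (2 * M)
        ≤ p.1 / min (2 * (M : ℝ)) (2 * (N : ℝ)) + p.2 / dsloc N (2 * M) := by
          gcongr
      _ ≤ 1 := h2
end

section
/- Let M, N be natural numbers with 1 ≤ N, N ≤ 2M and 2M ≤ 2N. Then M²(2M−N)/(4M² − 3MN + N²) ≤ N(2M−N)/(2M) (naturals cast to ℝ; note 4M² − 3MN + N² > 0). Equivalently, 2M³ ≤ 4M²N − 3MN² + N³ for M ≤ N. That is, the symmetric sum-SDoF point achieved per receiver by the coding scheme with only asymmetric output feedback (proof of Theorem 3) is dominated by the symmetric boundary point N(2M−N)/(2M) of the region of Theorem 1. -/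
/-- For 1 ≤ N, N ≤ 2M and 2M ≤ 2N, one has 4M² − 3MN + N² > 0 and
M²(2M−N)/(4M² − 3MN + N²) ≤ N(2M−N)/(2M). -/
theorem asymmetric_feedback_loss (M N : ℕ) (hN : 1 ≤ N) (h1 : N ≤ 2 * M)
    (h2 : 2 * M ≤ 2 * N) :
    0 < 4 * (M : ℝ) ^ 2 - 3 * (M : ℝ) * (N : ℝ) + (N : ℝ) ^ 2 ∧
    (M : ℝ) ^ 2 * (2 * (M : ℝ) - (N : ℝ)) /
        (4 * (M : ℝ) ^ 2 - 3 * (M : ℝ) * (N : ℝ) + (N : ℝ) ^ 2) ≤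
      (N : ℝ) * (2 * (M : ℝ) - (N : ℝ)) / (2 * (M : ℝ)) := by
  have hM : 1 ≤ M := by omega
  have hMr : (1 : ℝ) ≤ (M : ℝ) := by exact_mod_cast hM
  have hNr : (1 : ℝ) ≤ (N : ℝ) := by exact_mod_cast hN
  have h1r : (N : ℝ) ≤ 2 * M := by exact_mod_cast h1
  have h2r : (M : ℝ) ≤ N := by exact_mod_cast Nat.le_of_mul_le_mul_left h2 (by norm_num)
  have hden : 0 < 4 * (M : ℝ) ^ 2 - 3 * (M : ℝ) * (N : ℝ) + (N : ℝ) ^ 2 := by nlinarith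
  refine ⟨hden, ?_⟩
  rw [div_le_div_iff₀ hden (by linarith)]
  nlinarith [sq_nonneg ((M:ℝ) - N), sq_nonneg ((N:ℝ) - M), mul_nonneg (sub_nonneg.2 h2r) (sub_nonneg.2 h1r : (0:ℝ) ≤ 2*M - N), sq_nonneg (2*(M:ℝ)-N)]
end

section
/- Let M, N be natural numbers with 1 ≤ N < 2M, and set d = d_s(N,2M), m = min(2M,2N) (cast to ℝ), and p = d·m/(d+m). Then C_SDoF(M,N) equals the convex hull (over ℝ) of the four points (0,0), (d,0), (0,d), and (p,p). (Remark 1: the sum SDoF region of Theorem 1 is characterized fully by its three corner points (d_s(N,N,2M),0), (0,d_s(N,N,2M)) and the symmetric point, together with time-sharing.) -/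
lemma ds_pos (M N : ℕ) (hN : 1 ≤ N) (hM : N < 2 * M) : 0 < ds N (2 * M) := by
  have h1 : ¬ (2 * M ≤ N) := by omega
  have hN' : (1 : ℝ) ≤ (N : ℝ) := by exact_mod_cast hN
  have hM' : (N : ℝ) < 2 * (M : ℝ) := by exact_mod_cast hM
  rw [ds, if_neg h1]
  split_ifs with h2
  · have h2' : 2 * (M : ℝ) ≤ 2 * (N : ℝ) := by exact_mod_cast h2
    push_cast
    have p1 : (0:ℝ) < (N:ℝ) := by linarith
    have p2 : (0:ℝ) < 2 * (M:ℝ) := by linarith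
    have p3 : (0:ℝ) < 2 * (M:ℝ) - (N:ℝ) := by linarith
    apply div_pos
    · positivity
    · nlinarith [mul_pos p2 p3]
  · linarith

lemma ds_le_min (M N : ℕ) (hN : 1 ≤ N) (hM : N < 2 * M) :
    ds N (2 * M) ≤ min (2 * (M : ℝ)) (2 * (N : ℝ)) := by
  have h1 : ¬ (2 * M ≤ N) := by omega
  have hN' : (1 : ℝ) ≤ (N : ℝ) := by exact_mod_cast hN
  have hM' : (N : ℝ) < 2 * (M : ℝ) := by exact_mod_cast hM
  rw [ds, if_neg h1]
  split_ifs with h2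
  · have h2' : 2 * (M : ℝ) ≤ 2 * (N : ℝ) := by exact_mod_cast h2
    have hmin : min (2 * (M : ℝ)) (2 * (N : ℝ)) = 2 * (M : ℝ) := min_eq_left h2'
    rw [hmin]
    push_cast
    have p1 : (0:ℝ) < (N:ℝ) := by linarith
    have p2 : (0:ℝ) < 2 * (M:ℝ) := by linarith
    have p3 : (0:ℝ) < 2 * (M:ℝ) - (N:ℝ) := by linarith
    rw [div_le_iff₀ (by nlinarith [mul_pos p2 p3])]
    nlinarith [mul_nonneg p2.le (add_nonneg (sq_nonneg (2*(M:ℝ) - N)) (sq_nonneg (N:ℝ)))]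
  · have h2' : ¬ (2 * (M : ℝ) ≤ 2 * (N : ℝ)) := by
      intro hc; exact h2 (by exact_mod_cast hc)
    have hmin : min (2 * (M : ℝ)) (2 * (N : ℝ)) = 2 * (N : ℝ) := min_eq_right (by linarith)
    rw [hmin]
    linarith

/-- Auxiliary: abstract version with opaque d, m, q. -/
lemma hull_eq_aux (d m q : ℝ) (hd : 0 < d) (hdm : d ≤ m) (hq_def : d * m / (d + m) = q) :
    {p : ℝ × ℝ | 0 ≤ p.1 ∧ 0 ≤ p.2 ∧ p.1 / d + p.2 / m ≤ 1 ∧ p.1 / m + p.2 / d ≤ 1} =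
    convexHull ℝ ({((0 : ℝ), (0 : ℝ)), (d, 0), (0, d), (q, q)} : Set (ℝ × ℝ)) := by
  have hm : 0 < m := lt_of_lt_of_le hd hdm
  have hdms : 0 < d + m := by linarith
  have hq : 0 < q := hq_def ▸ div_pos (mul_pos hd hm) hdms
  apply Set.eq_of_subset_of_subset
  · rintro ⟨x, y⟩ ⟨hx, hy, h1, h2⟩
    simp only at hx hy h1 h2
    have hconv := convex_convexHull ℝ
      ({((0 : ℝ), (0 : ℝ)), (d, 0), (0, d), (q, q)} : Set (ℝ × ℝ))
    have hO : ((0:ℝ),(0:ℝ)) ∈ convexHull ℝ ({((0 : ℝ), (0 : ℝ)), (d, 0), (0, d), (q, q)} : Set (ℝ × ℝ)) :=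
      subset_convexHull _ _ (by simp)
    have hP1 : ((d:ℝ), (0:ℝ)) ∈ convexHull ℝ ({((0 : ℝ), (0 : ℝ)), (d, 0), (0, d), (q, q)} : Set (ℝ × ℝ)) :=
      subset_convexHull _ _ (by simp)
    have hP2 : ((0:ℝ), (d:ℝ)) ∈ convexHull ℝ ({((0 : ℝ), (0 : ℝ)), (d, 0), (0, d), (q, q)} : Set (ℝ × ℝ)) :=
      subset_convexHull _ _ (by simp)
    have hP3 : ((q:ℝ), (q:ℝ)) ∈ convexHull ℝ ({((0 : ℝ), (0 : ℝ)), (d, 0), (0, d), (q, q)} : Set (ℝ × ℝ)) :=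
      subset_convexHull _ _ (by simp)
    rcases le_total y x with hxy | hxy
    · have hb : 0 ≤ (x - y) / d := div_nonneg (by linarith) hd.le
      have he : 0 ≤ y / q := div_nonneg hy hq.le
      have hsum : (x - y) / d + y / q = x / d + y / m := by
        rw [← hq_def]; field_simp; ring
      have ha : 0 ≤ 1 - ((x - y) / d + y / q) := by
        rw [hsum]; linarith
      rcases eq_or_lt_of_le (add_nonneg hb he) with h0 | h0
      · have hb0 : (x - y) / d = 0 := by linarith
        have he0 : y / q = 0 := by linarith
        have hx0 : x - y = 0 := by
          rcases div_eq_zero_iff.1 hb0 with h | h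
          · exact h
          · exact absurd h hd.ne'
        have hy0 : y = 0 := by
          rcases div_eq_zero_iff.1 he0 with h | h
          · exact h
          · exact absurd h hq.ne'
        have : ((x, y) : ℝ × ℝ) = ((0:ℝ), (0:ℝ)) := by
          have : x = 0 := by linarith
          simp [this, hy0]
        rw [this]; exact hO
      · set s := (x - y) / d + y / q with hs_def
        have hmem : (((x - y) / d) / s) • ((d:ℝ), (0:ℝ)) + ((y / q) / s) • ((q:ℝ), (q:ℝ)) ∈
            convexHull ℝ ({((0 : ℝ), (0 : ℝ)), (d, 0), (0, d), (q, q)} : Set (ℝ × ℝ)) := by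
          apply hconv hP1 hP3 (div_nonneg hb h0.le) (div_nonneg he h0.le)
          rw [← add_div, div_self h0.ne']
        have hfin : (1 - s) • ((0:ℝ),(0:ℝ)) +
            s • ((((x - y) / d) / s) • ((d:ℝ), (0:ℝ)) + ((y / q) / s) • ((q:ℝ), (q:ℝ))) = (x, y) := by
          have hs := h0.ne'
          simp only [Prod.smul_mk, smul_eq_mul, smul_add, Prod.mk_add_mk, Prod.mk.injEq]
          constructor
          · field_simp
            ring
          · field_simp
            ring
        rw [← hfin]
        exact hconv hO hmem ha (add_nonneg hb he) (by ring)
    · have hb : 0 ≤ (y - x) / d := div_nonneg (by linarith) hd.le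
      have he : 0 ≤ x / q := div_nonneg hx hq.le
      have hsum : (y - x) / d + x / q = y / d + x / m := by
        rw [← hq_def]; field_simp; ring
      have ha : 0 ≤ 1 - ((y - x) / d + x / q) := by
        rw [hsum]; linarith
      rcases eq_or_lt_of_le (add_nonneg hb he) with h0 | h0
      · have hb0 : (y - x) / d = 0 := by linarith
        have he0 : x / q = 0 := by linarith
        have hy0' : y - x = 0 := by
          rcases div_eq_zero_iff.1 hb0 with h | h
          · exact h
          · exact absurd h hd.ne'
        have hx0 : x = 0 := by
          rcases div_eq_zero_iff.1 he0 with h | h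
          · exact h
          · exact absurd h hq.ne'
        have : ((x, y) : ℝ × ℝ) = ((0:ℝ), (0:ℝ)) := by
          have : y = 0 := by linarith
          simp [this, hx0]
        rw [this]; exact hO
      · set s := (y - x) / d + x / q with hs_def
        have hmem : (((y - x) / d) / s) • ((0:ℝ), (d:ℝ)) + ((x / q) / s) • ((q:ℝ), (q:ℝ)) ∈
            convexHull ℝ ({((0 : ℝ), (0 : ℝ)), (d, 0), (0, d), (q, q)} : Set (ℝ × ℝ)) := by
          apply hconv hP2 hP3 (div_nonneg hb h0.le) (div_nonneg he h0.le)
          rw [← add_div, div_self h0.ne']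
        have hfin : (1 - s) • ((0:ℝ),(0:ℝ)) +
            s • ((((y - x) / d) / s) • ((0:ℝ), (d:ℝ)) + ((x / q) / s) • ((q:ℝ), (q:ℝ))) = (x, y) := by
          have hs := h0.ne'
          simp only [Prod.smul_mk, smul_eq_mul, smul_add, Prod.mk_add_mk, Prod.mk.injEq]
          constructor
          · field_simp
            ring
          · field_simp
            ring
        rw [← hfin]
        exact hconv hO hmem ha (add_nonneg hb he) (by ring)
  · apply convexHull_min
    · rintro u hu
      simp only [Set.mem_insert_iff, Set.mem_singleton_iff] at hu
      rcases hu with rfl | rfl | rfl | rfl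
      · exact ⟨le_refl _, le_refl _, by simp, by simp⟩
      · refine ⟨hd.le, le_refl _, ?_, ?_⟩ <;> simp only
        · rw [div_self hd.ne', zero_div]; norm_num
        · rw [zero_div, add_zero, div_le_one hm]; exact hdm
      · refine ⟨le_refl _, hd.le, ?_, ?_⟩ <;> simp only
        · rw [zero_div, zero_add, div_le_one hm]; exact hdm
        · rw [div_self hd.ne', zero_div]; norm_num
      · have key : q / d + q / m = 1 := by rw [← hq_def]; field_simp; ring
        refine ⟨hq.le, hq.le, ?_, ?_⟩ <;> simp only
        · exact key.le
        · linarith [key]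
    · intro u hu v hv a b ha hb hab
      obtain ⟨hu1, hu2, hu3, hu4⟩ := hu
      obtain ⟨hv1, hv2, hv3, hv4⟩ := hv
      simp only [Set.mem_setOf_eq, Prod.fst_add, Prod.snd_add, Prod.smul_fst, Prod.smul_snd,
        smul_eq_mul] at hu1 hu2 hu3 hu4 hv1 hv2 hv3 hv4 ⊢
      refine ⟨?_, ?_, ?_, ?_⟩
      · have := mul_nonneg ha hu1; have := mul_nonneg hb hv1; linarith
      · have := mul_nonneg ha hu2; have := mul_nonneg hb hv2; linarith
      · have key : (a * u.1 + b * v.1) / d + (a * u.2 + b * v.2) / m =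
            a * (u.1 / d + u.2 / m) + b * (v.1 / d + v.2 / m) := by ring
        rw [key]; nlinarith
      · have key : (a * u.1 + b * v.1) / m + (a * u.2 + b * v.2) / d =
            a * (u.1 / m + u.2 / d) + b * (v.1 / m + v.2 / d) := by ring
        rw [key]; nlinarith


/-- For 1 ≤ N < 2M, with d = d_s(N,2M), m = min(2M,2N) and
p = d·m/(d+m), the region C_SDoF(M,N) equals the convex hull of
(0,0), (d,0), (0,d) and (p,p). -/
theorem CSDoF_eq_convexHull (M N : ℕ) (hN : 1 ≤ N) (hM : N < 2 * M) :
    CSDoF M N = convexHull ℝ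
      ({((0 : ℝ), (0 : ℝ)), (ds N (2 * M), 0), (0, ds N (2 * M)),
        (ds N (2 * M) * min (2 * (M : ℝ)) (2 * (N : ℝ)) /
            (ds N (2 * M) + min (2 * (M : ℝ)) (2 * (N : ℝ))),
          ds N (2 * M) * min (2 * (M : ℝ)) (2 * (N : ℝ)) /
            (ds N (2 * M) + min (2 * (M : ℝ)) (2 * (N : ℝ))))} : Set (ℝ × ℝ)) := by
  have hd := ds_pos M N hN hM
  have hdm := ds_le_min M N hN hM
  unfold CSDoF
  exact hull_eq_aux _ _ _ hd hdm rfl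
end
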